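/- Let the logarithmic reduction data depend differentiably on (x,t) ∈ ℝ² (′ denotes ∂/∂x, subscript t denotes ∂/∂t), and suppose the string equation holds for every (x,t). Fix j ∈ {0,1,…,n+1}, define F⁰_w := r, F⁰_x := r′w + u′/2, and for j ≥ 1, F^j_w := 1/(w − w_j), F^j_x := w_j′/(w_j − w) + (1/2)(r′/r − w_j′/w_j), and assume the τ_j-flow equations hold: for every (x,t) and every admissible w, r_t w + u_t + Σᵢ aᵢ w_{i,t}/(wᵢ − w) = w·F^j_w·Z_x − w·F^j_x·Z_w and r_t/w + ū_t + Σᵢ āᵢ w̄_{i,t}/(w̄ᵢ − 1/w) = w·F^j_w·Z̄_x − w·F^j_x·Z̄_w. Then u_t + Σ_l a_l w_{l,t}/w_l = 0, and for every k ∈ {1,…,n+1}: ā_k·[ r_t/w̄_k − r·w̄_{k,t}/w̄_k² + u_t + Σ_l a_l·(w_{l,t} + w̄_{k,t}/w̄_k²)/(w_l − 1/w̄_k) ] = 0. (That is, ∂_{τ_j} Ī_k = 0 for the conjugate linearizing variables Ī₀ = u + Σ a_l log w_l and Ī_k = ā_k·z evaluated at w = 1/w̄_k.) -/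

import Mathlib

open Finset Filter Topology

lemma eq_on_dense_compl {S : Set ℂ} (hS : S.Finite) {f g : ℂ → ℂ} {w₀ : ℂ}
    (hf : ContinuousAt f w₀) (hg : ContinuousAt g w₀)
    (h : ∀ w ∉ S, f w = g w) : f w₀ = g w₀ := by
  have hmem : (S \ {w₀})ᶜ ∈ 𝓝 w₀ :=
    ((hS.subset Set.diff_subset).isClosed.isOpen_compl).mem_nhds (by simp)
  have hset : {w₀}ᶜ ∩ (S \ {w₀})ᶜ = (S ∪ {w₀})ᶜ := by
    ext z; simp only [Set.mem_inter_iff, Set.mem_compl_iff, Set.mem_diff,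
      Set.mem_singleton_iff, Set.mem_union]; tauto
  have h1 : 𝓝[{w₀}ᶜ] w₀ = 𝓝[(S ∪ {w₀})ᶜ] w₀ := by
    rw [nhdsWithin_restrict' _ hmem, hset]
  have hne : (𝓝[(S ∪ {w₀})ᶜ] w₀).NeBot := by
    rw [← h1]; exact inferInstance
  have hfg : f =ᶠ[𝓝[(S ∪ {w₀})ᶜ] w₀] g := by
    filter_upwards [self_mem_nhdsWithin] with z hz
    exact h z (fun hzS => hz (Or.inl hzS))
  exact tendsto_nhds_unique (l := 𝓝[(S ∪ {w₀})ᶜ] w₀)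
    (hf.continuousWithinAt.tendsto.congr' hfg) hg.continuousWithinAt.tendsto

set_option maxHeartbeats 1000000 in
lemma aux_scalar (n : ℕ) (a abar : ℕ → ℂ)
    (R RX RT UX UT UBX UBT : ℂ)
    (Wc Wxc Wtc Wbc Wbxc Wbtc : ℕ → ℂ)
    (habar : ∀ i ∈ Finset.Icc 1 (n + 1), abar i ≠ 0)
    (hW0 : ∀ i ∈ Finset.Icc 1 (n + 1), Wc i ≠ 0)
    (hWb0 : ∀ i ∈ Finset.Icc 1 (n + 1), Wbc i ≠ 0)
    (hWbdist : ∀ i ∈ Finset.Icc 1 (n + 1), ∀ j ∈ Finset.Icc 1 (n + 1), i ≠ j → Wbc i ≠ Wbc j)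
    (hWWb : ∀ i ∈ Finset.Icc 1 (n + 1), ∀ j ∈ Finset.Icc 1 (n + 1), Wc i * Wbc j ≠ 1)
    (Fw Fx : ℂ → ℂ)
    (hFwc0 : ContinuousAt Fw 0) (hFxc0 : ContinuousAt Fx 0)
    (hFwck : ∀ k ∈ Finset.Icc 1 (n + 1), ContinuousAt Fw (Wbc k)⁻¹)
    (hFxck : ∀ k ∈ Finset.Icc 1 (n + 1), ContinuousAt Fx (Wbc k)⁻¹)
    (hstring : ∀ w : ℂ, w ≠ 0 → (∀ i ∈ Finset.Icc 1 (n + 1), w ≠ Wc i) →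
      (∀ i ∈ Finset.Icc 1 (n + 1), w ≠ (Wbc i)⁻¹) →
      w * (R + ∑ i ∈ Finset.Icc 1 (n + 1), a i / (w - Wc i)) *
          (RX / w + UBX + ∑ i ∈ Finset.Icc 1 (n + 1), abar i * Wbxc i / (Wbc i - 1 / w))
        - w * (RX * w + UX + ∑ i ∈ Finset.Icc 1 (n + 1), a i * Wxc i / (Wc i - w)) *
          (- R / w ^ 2 + ∑ i ∈ Finset.Icc 1 (n + 1), abar i / (w ^ 2 * (Wbc i - 1 / w))) = 1)
    (hflowz : ∀ w : ℂ, w ≠ 0 → (∀ i ∈ Finset.Icc 1 (n + 1), w ≠ Wc i) →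
      (∀ i ∈ Finset.Icc 1 (n + 1), w ≠ (Wbc i)⁻¹) →
      RT * w + UT + ∑ i ∈ Finset.Icc 1 (n + 1), a i * Wtc i / (Wc i - w)
        = w * Fw w * (RX * w + UX + ∑ i ∈ Finset.Icc 1 (n + 1), a i * Wxc i / (Wc i - w))
          - w * Fx w * (R + ∑ i ∈ Finset.Icc 1 (n + 1), a i / (w - Wc i)))
    (hflowzbar : ∀ w : ℂ, w ≠ 0 → (∀ i ∈ Finset.Icc 1 (n + 1), w ≠ Wc i) →
      (∀ i ∈ Finset.Icc 1 (n + 1), w ≠ (Wbc i)⁻¹) →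
      RT / w + UBT + ∑ i ∈ Finset.Icc 1 (n + 1), abar i * Wbtc i / (Wbc i - 1 / w)
        = w * Fw w *
            (RX / w + UBX + ∑ i ∈ Finset.Icc 1 (n + 1), abar i * Wbxc i / (Wbc i - 1 / w))
          - w * Fx w *
            (- R / w ^ 2 + ∑ i ∈ Finset.Icc 1 (n + 1), abar i / (w ^ 2 * (Wbc i - 1 / w)))) :
    (UT + ∑ l ∈ Finset.Icc 1 (n + 1), a l * Wtc l / Wc l = 0) ∧
      ∀ k ∈ Finset.Icc 1 (n + 1),
        abar k * (RT / Wbc k - R * Wbtc k / Wbc k ^ 2 + UT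
          + ∑ l ∈ Finset.Icc 1 (n + 1),
              a l * (Wtc l + Wbtc k / Wbc k ^ 2) / (Wc l - 1 / Wbc k)) = 0 := by
  classical
  set E := Finset.Icc 1 (n + 1) with hE
  set S : Finset ℂ := insert (0 : ℂ) (E.image Wc ∪ E.image fun i => (Wbc i)⁻¹) with hS
  have hadm : ∀ w : ℂ, w ∉ (↑S : Set ℂ) →
      w ≠ 0 ∧ (∀ i ∈ E, w ≠ Wc i) ∧ (∀ i ∈ E, w ≠ (Wbc i)⁻¹) := by
    intro w hw
    simp only [hS, Finset.coe_insert, Set.mem_insert_iff, Finset.coe_union, Set.mem_union,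
      Finset.coe_image, Set.mem_image, Finset.mem_coe, not_or, not_exists, not_and] at hw
    exact ⟨hw.1, fun i hi h => hw.2.1 i hi h.symm, fun i hi h => hw.2.2 i hi h.symm⟩
  constructor
  · -- evaluate the z-flow at w = 0
    have c1f : ContinuousAt (fun w : ℂ => RT * w + UT + ∑ i ∈ E, a i * Wtc i / (Wc i - w)) 0 :=
      ((continuousAt_const.mul continuousAt_id).add continuousAt_const).add
        (tendsto_finset_sum _ fun i hi => continuousAt_const.div
          (continuousAt_const.sub continuousAt_id) (by rw [sub_zero]; exact hW0 i hi))
    have c1g : ContinuousAt (fun w : ℂ =>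
        w * Fw w * (RX * w + UX + ∑ i ∈ E, a i * Wxc i / (Wc i - w))
          - w * Fx w * (R + ∑ i ∈ E, a i / (w - Wc i))) 0 := by
      refine ContinuousAt.sub (ContinuousAt.mul (continuousAt_id.mul hFwc0) ?_)
        (ContinuousAt.mul (continuousAt_id.mul hFxc0) ?_)
      · exact ((continuousAt_const.mul continuousAt_id).add continuousAt_const).add
          (tendsto_finset_sum _ fun i hi => continuousAt_const.div
            (continuousAt_const.sub continuousAt_id) (by rw [sub_zero]; exact hW0 i hi))
      · exact continuousAt_const.add
          (tendsto_finset_sum _ fun i hi => continuousAt_const.div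
            (continuousAt_id.sub continuousAt_const)
            (by rw [zero_sub]; exact neg_ne_zero.mpr (hW0 i hi)))
    have key1 := eq_on_dense_compl S.finite_toSet c1f c1g
      (fun w hw => by obtain ⟨h1, h2, h3⟩ := hadm w hw; exact hflowz w h1 h2 h3)
    simpa using key1
  · intro k hk
    have hB : Wbc k ≠ 0 := hWb0 k hk
    have habk : abar k ≠ 0 := habar k hk
    have hw0 : (Wbc k)⁻¹ ≠ 0 := inv_ne_zero hB
    have hwWne : ∀ i ∈ E, (Wbc k)⁻¹ ≠ Wc i := by
      intro i hi h
      exact hWWb i hi k hk (by rw [← h, inv_mul_cancel₀ hB])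
    have hwW1 : ∀ i ∈ E, Wc i - (Wbc k)⁻¹ ≠ 0 :=
      fun i hi => sub_ne_zero.mpr (fun h => hwWne i hi (by rw [h]))
    have hwW2 : ∀ i ∈ E, (Wbc k)⁻¹ - Wc i ≠ 0 :=
      fun i hi => sub_ne_zero.mpr (hwWne i hi)
    have hwne : ∀ i ∈ E.erase k, Wbc i - 1 / (Wbc k)⁻¹ ≠ 0 := by
      intro i hi
      rw [one_div, inv_inv]
      exact sub_ne_zero.mpr
        (hWbdist i (Finset.mem_of_mem_erase hi) k hk (Finset.ne_of_mem_erase hi))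
    -- continuity building blocks at w₀ = (Wbc k)⁻¹
    have cZw : ContinuousAt (fun w : ℂ => R + ∑ i ∈ E, a i / (w - Wc i)) (Wbc k)⁻¹ :=
      continuousAt_const.add (tendsto_finset_sum _ fun i hi => continuousAt_const.div
        (continuousAt_id.sub continuousAt_const) (hwW2 i hi))
    have cZx : ContinuousAt
        (fun w : ℂ => RX * w + UX + ∑ i ∈ E, a i * Wxc i / (Wc i - w)) (Wbc k)⁻¹ :=
      ((continuousAt_const.mul continuousAt_id).add continuousAt_const).add
        (tendsto_finset_sum _ fun i hi => continuousAt_const.div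
          (continuousAt_const.sub continuousAt_id) (hwW1 i hi))
    have cP1 : ContinuousAt (fun w : ℂ =>
        RX / w + UBX + ∑ i ∈ E.erase k, abar i * Wbxc i / (Wbc i - 1 / w)) (Wbc k)⁻¹ :=
      ((continuousAt_const.div continuousAt_id hw0).add continuousAt_const).add
        (tendsto_finset_sum _ fun i hi => continuousAt_const.div
          (continuousAt_const.sub (continuousAt_const.div continuousAt_id hw0)) (hwne i hi))
    have cP2 : ContinuousAt (fun w : ℂ =>
        - R / w ^ 2 + ∑ i ∈ E.erase k, abar i / (w ^ 2 * (Wbc i - 1 / w))) (Wbc k)⁻¹ :=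
      (continuousAt_const.div (continuousAt_id.pow 2) (pow_ne_zero 2 hw0)).add
        (tendsto_finset_sum _ fun i hi => continuousAt_const.div
          ((continuousAt_id.pow 2).mul
            (continuousAt_const.sub (continuousAt_const.div continuousAt_id hw0)))
          (mul_ne_zero (pow_ne_zero 2 hw0) (hwne i hi)))
    have cQ1 : ContinuousAt (fun w : ℂ =>
        (w - (Wbc k)⁻¹) *
            (RX / w + UBX + ∑ i ∈ E.erase k, abar i * Wbxc i / (Wbc i - 1 / w))
          + abar k * Wbxc k * w / Wbc k) (Wbc k)⁻¹ :=
      ((continuousAt_id.sub continuousAt_const).mul cP1).add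
        ((continuousAt_const.mul continuousAt_id).div continuousAt_const hB)
    have cQ2 : ContinuousAt (fun w : ℂ =>
        (w - (Wbc k)⁻¹) *
            (- R / w ^ 2 + ∑ i ∈ E.erase k, abar i / (w ^ 2 * (Wbc i - 1 / w)))
          + abar k / (w * Wbc k)) (Wbc k)⁻¹ :=
      ((continuousAt_id.sub continuousAt_const).mul cP2).add
        (continuousAt_const.div (continuousAt_id.mul continuousAt_const)
          (mul_ne_zero hw0 hB))
    -- Step A : residue of the string equation at w₀
    have keyA := eq_on_dense_compl S.finite_toSet
      (f := fun w : ℂ => w - (Wbc k)⁻¹)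
      (g := fun w : ℂ =>
        w * (R + ∑ i ∈ E, a i / (w - Wc i)) *
            ((w - (Wbc k)⁻¹) *
                (RX / w + UBX + ∑ i ∈ E.erase k, abar i * Wbxc i / (Wbc i - 1 / w))
              + abar k * Wbxc k * w / Wbc k)
          - w * (RX * w + UX + ∑ i ∈ E, a i * Wxc i / (Wc i - w)) *
            ((w - (Wbc k)⁻¹) *
                (- R / w ^ 2 + ∑ i ∈ E.erase k, abar i / (w ^ 2 * (Wbc i - 1 / w)))
              + abar k / (w * Wbc k)))
      (continuousAt_id.sub continuousAt_const)
      (((continuousAt_id.mul cZw).mul cQ1).sub ((continuousAt_id.mul cZx).mul cQ2))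
      (by
        intro w hw
        obtain ⟨h1, h2, h3⟩ := hadm w hw
        have hs := hstring w h1 h2 h3
        have hkne : Wbc k - 1 / w ≠ 0 := by
          rw [sub_ne_zero]
          intro hEq
          exact h3 k hk (by rw [hEq, one_div, inv_inv])
        have hD' : w * Wbc k - 1 ≠ 0 := by
          rw [sub_ne_zero]
          intro hEq
          exact h3 k hk (eq_inv_of_mul_eq_one_left (by linear_combination hEq))
        have hD : Wbc k - 1 / w = (w * Wbc k - 1) / w := by
          field_simp
          try ring
        have hsplit1 : ∑ i ∈ E, abar i * Wbxc i / (Wbc i - 1 / w)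
            = abar k * Wbxc k / (Wbc k - 1 / w)
              + ∑ i ∈ E.erase k, abar i * Wbxc i / (Wbc i - 1 / w) :=
          (Finset.add_sum_erase E _ hk).symm
        have hsplit2 : ∑ i ∈ E, abar i / (w ^ 2 * (Wbc i - 1 / w))
            = abar k / (w ^ 2 * (Wbc k - 1 / w))
              + ∑ i ∈ E.erase k, abar i / (w ^ 2 * (Wbc i - 1 / w)) :=
          (Finset.add_sum_erase E _ hk).symm
        rw [hsplit1, hsplit2] at hs
        have e1 : (w - (Wbc k)⁻¹) * (abar k * Wbxc k / (Wbc k - 1 / w))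
            = abar k * Wbxc k * w / Wbc k := by
          rw [hD]
          field_simp
        have e2 : (w - (Wbc k)⁻¹) * (abar k / (w ^ 2 * (Wbc k - 1 / w)))
            = abar k / (w * Wbc k) := by
          rw [hD]
          field_simp
        linear_combination -((w - (Wbc k)⁻¹) * hs)
          + w * (R + ∑ i ∈ E, a i / (w - Wc i)) * e1
          - w * (RX * w + UX + ∑ i ∈ E, a i * Wxc i / (Wc i - w)) * e2)
    simp only [sub_self, zero_mul, zero_add, mul_zero, add_zero] at keyA
    -- Step B : residue of the z̄-flow at w₀
    have cPB : ContinuousAt (fun w : ℂ =>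
        RT / w + UBT + ∑ i ∈ E.erase k, abar i * Wbtc i / (Wbc i - 1 / w)) (Wbc k)⁻¹ :=
      ((continuousAt_const.div continuousAt_id hw0).add continuousAt_const).add
        (tendsto_finset_sum _ fun i hi => continuousAt_const.div
          (continuousAt_const.sub (continuousAt_const.div continuousAt_id hw0)) (hwne i hi))
    have keyB := eq_on_dense_compl S.finite_toSet
      (f := fun w : ℂ =>
        (w - (Wbc k)⁻¹) *
            (RT / w + UBT + ∑ i ∈ E.erase k, abar i * Wbtc i / (Wbc i - 1 / w))
          + abar k * Wbtc k * w / Wbc k)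
      (g := fun w : ℂ =>
        w * Fw w *
            ((w - (Wbc k)⁻¹) *
                (RX / w + UBX + ∑ i ∈ E.erase k, abar i * Wbxc i / (Wbc i - 1 / w))
              + abar k * Wbxc k * w / Wbc k)
          - w * Fx w *
            ((w - (Wbc k)⁻¹) *
                (- R / w ^ 2 + ∑ i ∈ E.erase k, abar i / (w ^ 2 * (Wbc i - 1 / w)))
              + abar k / (w * Wbc k)))
      (((continuousAt_id.sub continuousAt_const).mul cPB).add
        ((continuousAt_const.mul continuousAt_id).div continuousAt_const hB))
      (((continuousAt_id.mul (hFwck k hk)).mul cQ1).sub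
        ((continuousAt_id.mul (hFxck k hk)).mul cQ2))
      (by
        intro w hw
        obtain ⟨h1, h2, h3⟩ := hadm w hw
        have hs := hflowzbar w h1 h2 h3
        have hkne : Wbc k - 1 / w ≠ 0 := by
          rw [sub_ne_zero]
          intro hEq
          exact h3 k hk (by rw [hEq, one_div, inv_inv])
        have hD' : w * Wbc k - 1 ≠ 0 := by
          rw [sub_ne_zero]
          intro hEq
          exact h3 k hk (eq_inv_of_mul_eq_one_left (by linear_combination hEq))
        have hD : Wbc k - 1 / w = (w * Wbc k - 1) / w := by
          field_simp
          try ring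
        have hsplit1 : ∑ i ∈ E, abar i * Wbxc i / (Wbc i - 1 / w)
            = abar k * Wbxc k / (Wbc k - 1 / w)
              + ∑ i ∈ E.erase k, abar i * Wbxc i / (Wbc i - 1 / w) :=
          (Finset.add_sum_erase E _ hk).symm
        have hsplit2 : ∑ i ∈ E, abar i / (w ^ 2 * (Wbc i - 1 / w))
            = abar k / (w ^ 2 * (Wbc k - 1 / w))
              + ∑ i ∈ E.erase k, abar i / (w ^ 2 * (Wbc i - 1 / w)) :=
          (Finset.add_sum_erase E _ hk).symm
        have hsplit3 : ∑ i ∈ E, abar i * Wbtc i / (Wbc i - 1 / w)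
            = abar k * Wbtc k / (Wbc k - 1 / w)
              + ∑ i ∈ E.erase k, abar i * Wbtc i / (Wbc i - 1 / w) :=
          (Finset.add_sum_erase E _ hk).symm
        rw [hsplit1, hsplit2, hsplit3] at hs
        have e1 : (w - (Wbc k)⁻¹) * (abar k * Wbxc k / (Wbc k - 1 / w))
            = abar k * Wbxc k * w / Wbc k := by
          rw [hD]
          field_simp
        have e2 : (w - (Wbc k)⁻¹) * (abar k / (w ^ 2 * (Wbc k - 1 / w)))
            = abar k / (w * Wbc k) := by
          rw [hD]
          field_simp
        have e1t : (w - (Wbc k)⁻¹) * (abar k * Wbtc k / (Wbc k - 1 / w))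
            = abar k * Wbtc k * w / Wbc k := by
          rw [hD]
          field_simp
        linear_combination (w - (Wbc k)⁻¹) * hs - e1t
          + w * Fw w * e1 - w * Fx w * e2)
    simp only [sub_self, zero_mul, zero_add, mul_zero, add_zero] at keyB
    -- Step C : the z-flow extended by continuity to w₀
    have keyC := eq_on_dense_compl S.finite_toSet
      (f := fun w : ℂ => RT * w + UT + ∑ i ∈ E, a i * Wtc i / (Wc i - w))
      (g := fun w : ℂ =>
        w * Fw w * (RX * w + UX + ∑ i ∈ E, a i * Wxc i / (Wc i - w))
          - w * Fx w * (R + ∑ i ∈ E, a i / (w - Wc i)))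
      (((continuousAt_const.mul continuousAt_id).add continuousAt_const).add
        (tendsto_finset_sum _ fun i hi => continuousAt_const.div
          (continuousAt_const.sub continuousAt_id) (hwW1 i hi)))
      (((continuousAt_id.mul (hFwck k hk)).mul cZx).sub
        ((continuousAt_id.mul (hFxck k hk)).mul cZw))
      (fun w hw => by obtain ⟨h1, h2, h3⟩ := hadm w hw; exact hflowz w h1 h2 h3)
    -- assemble
    simp only [one_div]
    have hsum : ∑ l ∈ E, a l * (Wtc l + Wbtc k / Wbc k ^ 2) / (Wc l - (Wbc k)⁻¹)
        = (∑ l ∈ E, a l * Wtc l / (Wc l - (Wbc k)⁻¹))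
          - Wbtc k / Wbc k ^ 2 * ∑ l ∈ E, a l / ((Wbc k)⁻¹ - Wc l) := by
      rw [Finset.mul_sum, ← Finset.sum_sub_distrib]
      refine Finset.sum_congr rfl fun l hl => ?_
      have hne1 : Wc l * Wbc k - 1 ≠ 0 := by
        rw [sub_ne_zero]
        exact hWWb l hl k hk
      have hE1 : Wc l - (Wbc k)⁻¹ = (Wc l * Wbc k - 1) / Wbc k := by field_simp
      have hE2 : (Wbc k)⁻¹ - Wc l = -((Wc l * Wbc k - 1) / Wbc k) := by rw [← hE1]; ring
      rw [hE1, hE2, div_neg, mul_neg, sub_neg_eq_add, div_div_eq_mul_div, div_div_eq_mul_div,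
        div_div_eq_mul_div]
      field_simp
    rw [hsum]
    have keyC' : RT * (Wbc k)⁻¹ + UT + ∑ i ∈ E, a i * Wtc i / (Wc i - (Wbc k)⁻¹)
        = (Wbc k)⁻¹ * Fw (Wbc k)⁻¹ *
            (RX * (Wbc k)⁻¹ + UX + ∑ i ∈ E, a i * Wxc i / (Wc i - (Wbc k)⁻¹))
          - (Wbc k)⁻¹ * Fx (Wbc k)⁻¹ *
            (R + ∑ i ∈ E, a i / ((Wbc k)⁻¹ - Wc i)) := keyC
    set S1 : ℂ := ∑ l ∈ E, a l * Wtc l / (Wc l - (Wbc k)⁻¹) with hS1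
    set S2 : ℂ := ∑ l ∈ E, a l / ((Wbc k)⁻¹ - Wc l) with hS2
    set S3 : ℂ := ∑ l ∈ E, a l * Wxc l / (Wc l - (Wbc k)⁻¹) with hS3
    set FW : ℂ := Fw (Wbc k)⁻¹ with hFW
    set FX : ℂ := Fx (Wbc k)⁻¹ with hFX
    clear keyC cZw cZx cP1 cP2 cQ1 cQ2 cPB hstring hflowz hflowzbar hadm
    field_simp at keyA
    field_simp at keyB
    field_simp at keyC'
    have hG : abar k * Wbc k ^ 4 *
        (RT * Wbc k + UT * Wbc k ^ 2 + S1 * Wbc k ^ 2 - R * Wbtc k - Wbtc k * S2) = 0 := by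
      linear_combination abar k * Wbc k ^ 4 * keyC' - abar k * Wbc k ^ 3 * (R + S2) * keyB + FW * Wbc k ^ 3 * keyA
    have hN : RT * Wbc k + UT * Wbc k ^ 2 + S1 * Wbc k ^ 2 - R * Wbtc k - Wbtc k * S2 = 0 :=
      (mul_eq_zero.mp hG).resolve_left
        (mul_ne_zero habk (pow_ne_zero 4 hB))
    have hX : RT / Wbc k - R * Wbtc k / Wbc k ^ 2 + UT + (S1 - Wbtc k / Wbc k ^ 2 * S2)
        = (RT * Wbc k + UT * Wbc k ^ 2 + S1 * Wbc k ^ 2 - R * Wbtc k - Wbtc k * S2)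
            / Wbc k ^ 2 := by
      field_simp
      ring
    rw [hX, hN, zero_div, mul_zero]

/-- for the logarithmic reduction evolving under the `τ_j`-flow and
constrained by the string equation, the conjugate linearizing variables
`Ī₀ = u + Σ a_l log w_l` and `Ī_k = ā_k·z(1/w̄_k)` satisfy `∂_{τ_j} Ī_k = 0`. -/
theorem tau_flow_conjugate_linearizing_variables_Ibar
    (n : ℕ) (a abar : ℕ → ℂ)
    (r u ubar : ℝ → ℝ → ℂ) (W Wb : ℕ → ℝ → ℝ → ℂ)
    -- ∂/∂x and ∂/∂t of the data
    (rx ux ubarx rt ut ubart : ℝ → ℝ → ℂ) (Wx Wbx Wt Wbt : ℕ → ℝ → ℝ → ℂ)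
    (ha : ∀ i ∈ Finset.Icc 1 (n + 1), a i ≠ 0)
    (habar : ∀ i ∈ Finset.Icc 1 (n + 1), abar i ≠ 0)
    (hasum : ∑ i ∈ Finset.Icc 1 (n + 1), a i = 0)
    (habarsum : ∑ i ∈ Finset.Icc 1 (n + 1), abar i = 0)
    (hr0 : ∀ x t : ℝ, r x t ≠ 0)
    (hW0 : ∀ i ∈ Finset.Icc 1 (n + 1), ∀ x t : ℝ, W i x t ≠ 0)
    (hWb0 : ∀ i ∈ Finset.Icc 1 (n + 1), ∀ x t : ℝ, Wb i x t ≠ 0)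
    (hWdist : ∀ i ∈ Finset.Icc 1 (n + 1), ∀ j ∈ Finset.Icc 1 (n + 1), i ≠ j →
      ∀ x t : ℝ, W i x t ≠ W j x t)
    (hWbdist : ∀ i ∈ Finset.Icc 1 (n + 1), ∀ j ∈ Finset.Icc 1 (n + 1), i ≠ j →
      ∀ x t : ℝ, Wb i x t ≠ Wb j x t)
    (hWWb : ∀ i ∈ Finset.Icc 1 (n + 1), ∀ j ∈ Finset.Icc 1 (n + 1),
      ∀ x t : ℝ, W i x t * Wb j x t ≠ 1)
    (hdrx : ∀ x t, HasDerivAt (fun y => r y t) (rx x t) x)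
    (hdrt : ∀ x t, HasDerivAt (fun s => r x s) (rt x t) t)
    (hdux : ∀ x t, HasDerivAt (fun y => u y t) (ux x t) x)
    (hdut : ∀ x t, HasDerivAt (fun s => u x s) (ut x t) t)
    (hdubarx : ∀ x t, HasDerivAt (fun y => ubar y t) (ubarx x t) x)
    (hdubart : ∀ x t, HasDerivAt (fun s => ubar x s) (ubart x t) t)
    (hdWx : ∀ i ∈ Finset.Icc 1 (n + 1), ∀ x t, HasDerivAt (fun y => W i y t) (Wx i x t) x)
    (hdWt : ∀ i ∈ Finset.Icc 1 (n + 1), ∀ x t, HasDerivAt (fun s => W i x s) (Wt i x t) t)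
    (hdWbx : ∀ i ∈ Finset.Icc 1 (n + 1), ∀ x t, HasDerivAt (fun y => Wb i y t) (Wbx i x t) x)
    (hdWbt : ∀ i ∈ Finset.Icc 1 (n + 1), ∀ x t, HasDerivAt (fun s => Wb i x s) (Wbt i x t) t)
    -- the rational (in w) partial derivatives of z and z̄
    (Zw Zx Zbw Zbx : ℝ → ℝ → ℂ → ℂ)
    (hZw : ∀ x t w, Zw x t w = r x t + ∑ i ∈ Finset.Icc 1 (n + 1), a i / (w - W i x t))
    (hZx : ∀ x t w, Zx x t w =
      rx x t * w + ux x t + ∑ i ∈ Finset.Icc 1 (n + 1), a i * Wx i x t / (W i x t - w))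
    (hZbw : ∀ x t w, Zbw x t w =
      - r x t / w ^ 2 + ∑ i ∈ Finset.Icc 1 (n + 1), abar i / (w ^ 2 * (Wb i x t - 1 / w)))
    (hZbx : ∀ x t w, Zbx x t w =
      rx x t / w + ubarx x t
        + ∑ i ∈ Finset.Icc 1 (n + 1), abar i * Wbx i x t / (Wb i x t - 1 / w))
    -- the string equation
    (hstring : ∀ (x t : ℝ) (w : ℂ), w ≠ 0 → (∀ j ∈ Finset.Icc 1 (n + 1), w ≠ W j x t) →
      (∀ j ∈ Finset.Icc 1 (n + 1), w ≠ (Wb j x t)⁻¹) →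
      w * Zw x t w * Zbx x t w - w * Zx x t w * Zbw x t w = 1)
    -- the fixed index j and the derivatives F^j of the evolution function 𝓗_j
    (j : ℕ) (hj : j ≤ n + 1)
    (Fw Fx : ℝ → ℝ → ℂ → ℂ)
    (hFw : ∀ x t w, Fw x t w = if j = 0 then r x t else (w - W j x t)⁻¹)
    (hFx : ∀ x t w, Fx x t w = if j = 0 then rx x t * w + ux x t / 2 else
      Wx j x t / (W j x t - w) + (1 / 2) * (rx x t / r x t - Wx j x t / W j x t))
    -- the τ_j-flow equations for z and z̄
    (hflowz : ∀ (x t : ℝ) (w : ℂ), w ≠ 0 → (∀ i ∈ Finset.Icc 1 (n + 1), w ≠ W i x t) →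
      (∀ i ∈ Finset.Icc 1 (n + 1), w ≠ (Wb i x t)⁻¹) →
      rt x t * w + ut x t + ∑ i ∈ Finset.Icc 1 (n + 1), a i * Wt i x t / (W i x t - w)
        = w * Fw x t w * Zx x t w - w * Fx x t w * Zw x t w)
    (hflowzbar : ∀ (x t : ℝ) (w : ℂ), w ≠ 0 → (∀ i ∈ Finset.Icc 1 (n + 1), w ≠ W i x t) →
      (∀ i ∈ Finset.Icc 1 (n + 1), w ≠ (Wb i x t)⁻¹) →
      rt x t / w + ubart x t
          + ∑ i ∈ Finset.Icc 1 (n + 1), abar i * Wbt i x t / (Wb i x t - 1 / w)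
        = w * Fw x t w * Zbx x t w - w * Fx x t w * Zbw x t w) :
    ∀ x t : ℝ,
      (ut x t + ∑ l ∈ Finset.Icc 1 (n + 1), a l * Wt l x t / W l x t = 0) ∧
      ∀ k ∈ Finset.Icc 1 (n + 1),
        abar k * (rt x t / Wb k x t - r x t * Wbt k x t / (Wb k x t) ^ 2 + ut x t
          + ∑ l ∈ Finset.Icc 1 (n + 1),
              a l * (Wt l x t + Wbt k x t / (Wb k x t) ^ 2) / (W l x t - 1 / Wb k x t))
          = 0 := by
  intro x t
  by_cases hj0 : j = 0
  · refine aux_scalar n a abar (r x t) (rx x t) (rt x t) (ux x t) (ut x t) (ubarx x t)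
      (ubart x t) (fun i => W i x t) (fun i => Wx i x t) (fun i => Wt i x t)
      (fun i => Wb i x t) (fun i => Wbx i x t) (fun i => Wbt i x t)
      (fun i hi => habar i hi) (fun i hi => hW0 i hi x t) (fun i hi => hWb0 i hi x t)
      (fun i hi j' hj' hij => hWbdist i hi j' hj' hij x t)
      (fun i hi j' hj' => hWWb i hi j' hj' x t)
      (Fw x t) (Fx x t) ?_ ?_ (fun k hk => ?_) (fun k hk => ?_) ?_ ?_ ?_
    · have h : Fw x t = fun w => r x t := funext fun w => by rw [hFw x t w, if_pos hj0]
      rw [h]; exact continuousAt_const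
    · have h : Fx x t = fun w => rx x t * w + ux x t / 2 :=
        funext fun w => by rw [hFx x t w, if_pos hj0]
      rw [h]; exact (continuousAt_const.mul continuousAt_id).add continuousAt_const
    · have h : Fw x t = fun w => r x t := funext fun w => by rw [hFw x t w, if_pos hj0]
      rw [h]; exact continuousAt_const
    · have h : Fx x t = fun w => rx x t * w + ux x t / 2 :=
        funext fun w => by rw [hFx x t w, if_pos hj0]
      rw [h]; exact (continuousAt_const.mul continuousAt_id).add continuousAt_const
    · intro w h1 h2 h3
      have hst := hstring x t w h1 h2 h3
      rw [hZw x t w, hZx x t w, hZbw x t w, hZbx x t w] at hst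
      exact hst
    · intro w h1 h2 h3
      have hfl := hflowz x t w h1 h2 h3
      rw [hZw x t w, hZx x t w] at hfl
      exact hfl
    · intro w h1 h2 h3
      have hfl := hflowzbar x t w h1 h2 h3
      rw [hZbw x t w, hZbx x t w] at hfl
      exact hfl
  · have hjmem : j ∈ Finset.Icc 1 (n + 1) :=
      Finset.mem_Icc.mpr ⟨Nat.one_le_iff_ne_zero.mpr hj0, hj⟩
    have hFweq : Fw x t = fun w => (w - W j x t)⁻¹ :=
      funext fun w => by rw [hFw x t w, if_neg hj0]
    have hFxeq : Fx x t = fun w =>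
        Wx j x t / (W j x t - w) + (1 / 2) * (rx x t / r x t - Wx j x t / W j x t) :=
      funext fun w => by rw [hFx x t w, if_neg hj0]
    refine aux_scalar n a abar (r x t) (rx x t) (rt x t) (ux x t) (ut x t) (ubarx x t)
      (ubart x t) (fun i => W i x t) (fun i => Wx i x t) (fun i => Wt i x t)
      (fun i => Wb i x t) (fun i => Wbx i x t) (fun i => Wbt i x t)
      (fun i hi => habar i hi) (fun i hi => hW0 i hi x t) (fun i hi => hWb0 i hi x t)
      (fun i hi j' hj' hij => hWbdist i hi j' hj' hij x t)
      (fun i hi j' hj' => hWWb i hi j' hj' x t)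
      (Fw x t) (Fx x t) ?_ ?_ (fun k hk => ?_) (fun k hk => ?_) ?_ ?_ ?_
    · rw [hFweq]
      exact (continuousAt_id.sub continuousAt_const).inv₀
        (sub_ne_zero.mpr (Ne.symm (hW0 j hjmem x t)))
    · rw [hFxeq]
      exact (continuousAt_const.div (continuousAt_const.sub continuousAt_id)
        (sub_ne_zero.mpr (hW0 j hjmem x t))).add continuousAt_const
    · have hne : (Wb k x t)⁻¹ - W j x t ≠ 0 := by
        rw [sub_ne_zero]
        intro h
        exact hWWb j hjmem k hk x t (by rw [← h, inv_mul_cancel₀ (hWb0 k hk x t)])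
      rw [hFweq]
      exact (continuousAt_id.sub continuousAt_const).inv₀ hne
    · have hne : W j x t - (Wb k x t)⁻¹ ≠ 0 := by
        rw [sub_ne_zero]
        intro h
        exact hWWb j hjmem k hk x t (by rw [h, inv_mul_cancel₀ (hWb0 k hk x t)])
      rw [hFxeq]
      exact (continuousAt_const.div (continuousAt_const.sub continuousAt_id) hne).add
        continuousAt_const
    · intro w h1 h2 h3
      have hst := hstring x t w h1 h2 h3
      rw [hZw x t w, hZx x t w, hZbw x t w, hZbx x t w] at hst
      exact hst
    · intro w h1 h2 h3
      have hfl := hflowz x t w h1 h2 h3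
      rw [hZw x t w, hZx x t w] at hfl
      exact hfl
    · intro w h1 h2 h3
      have hfl := hflowzbar x t w h1 h2 h3
      rw [hZbw x t w, hZbx x t w] at hfl
      exact hfl
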